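/- Let P be a Markov kernel satisfying the drift condition PV(x) ≤ λ V(x) + b·1_S(x) for all x, where V : X → [1, ∞], λ < 1, b < ∞, and S is measurable. Then for every j ∈ ℕ, the function V̂ = V^{1/j} satisfies P V̂(x) ≤ λ^{1/j} V̂(x) + b^{1/j}·1_S(x) for all x ∈ X. -/

import Mathlib

open MeasureTheory ProbabilityTheory
open scoped ENNReal

/-- If a Markov kernel `P` satisfies the drift condition `PV ≤ λV + b·1_S`, then for each
`j ≥ 1` the function `V̂ = V^{1/j}` satisfies `P V̂ ≤ λ^{1/j} V̂ + b^{1/j}·1_S`. -/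
theorem drift_rpow {X : Type*} [MeasurableSpace X]
    (P : Kernel X X) [IsMarkovKernel P]
    (V : X → ℝ≥0∞) (hV : Measurable V) (hV1 : ∀ x, 1 ≤ V x)
    (S : Set X) (hS : MeasurableSet S)
    (lam b : ℝ≥0∞) (hlam : lam < 1) (hb : b < ⊤)
    (hdrift : ∀ x, ∫⁻ y, V y ∂(P x) ≤ lam * V x + b * S.indicator 1 x)
    (j : ℕ) (hj : 1 ≤ j) :
    ∀ x, ∫⁻ y, V y ^ (1 / (j : ℝ)) ∂(P x)
      ≤ lam ^ (1 / (j : ℝ)) * V x ^ (1 / (j : ℝ))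
        + b ^ (1 / (j : ℝ)) * S.indicator 1 x := by
  intro x
  have hj0 : (0:ℝ) < (j:ℝ) := by exact_mod_cast hj
  have hp0 : (0:ℝ) ≤ 1 / (j:ℝ) := by positivity
  have hp1 : 1 / (j:ℝ) ≤ 1 := by
    rw [div_le_one hj0]; exact_mod_cast hj
  -- Jensen: ∫ V^{1/j} ≤ (∫ V)^{1/j}
  have jensen : ∫⁻ y, V y ^ (1 / (j : ℝ)) ∂(P x) ≤ (∫⁻ y, V y ∂(P x)) ^ (1 / (j : ℝ)) := by
    rcases eq_or_lt_of_le hj with hj1 | hj2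
    · simp [← hj1]
    · have hjR : (1:ℝ) < (j:ℝ) := by exact_mod_cast hj2
      have hpq : ((j:ℝ)).HolderConjugate ((j:ℝ) / ((j:ℝ) - 1)) :=
        Real.HolderConjugate.conjExponent hjR
      have hpow : ∀ y, (V y ^ (1 / (j:ℝ))) ^ (j:ℝ) = V y := fun y => by
        rw [← ENNReal.rpow_mul, one_div, inv_mul_cancel₀ hj0.ne', ENNReal.rpow_one]
      calc ∫⁻ y, V y ^ (1 / (j:ℝ)) ∂(P x)
          = ∫⁻ y, (V y ^ (1 / (j:ℝ))) * (fun _ => (1:ℝ≥0∞)) y ∂(P x) := by simp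
        _ ≤ (∫⁻ y, (V y ^ (1 / (j:ℝ))) ^ (j:ℝ) ∂(P x)) ^ (1 / (j:ℝ))
              * (∫⁻ y, (fun _ => (1:ℝ≥0∞)) y ^ ((j:ℝ) / ((j:ℝ) - 1)) ∂(P x))
                ^ (1 / ((j:ℝ) / ((j:ℝ) - 1))) :=
            ENNReal.lintegral_mul_le_Lp_mul_Lq (P x) hpq
              (hV.pow_const (1 / (j:ℝ))).aemeasurable aemeasurable_const
        _ = (∫⁻ y, V y ∂(P x)) ^ (1 / (j:ℝ)) := by
            simp only [hpow, ENNReal.one_rpow, lintegral_one, measure_univ, mul_one]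
  refine jensen.trans ?_
  have mono := ENNReal.rpow_le_rpow (hdrift x) hp0
  refine mono.trans ?_
  refine (ENNReal.rpow_add_le_add_rpow _ _ hp0 hp1).trans ?_
  gcongr
  · rw [ENNReal.mul_rpow_of_nonneg _ _ hp0]
  · rw [ENNReal.mul_rpow_of_nonneg _ _ hp0]
    by_cases hx : x ∈ S
    · simp [Set.indicator_of_mem hx]
    · simp [Set.indicator_of_notMem hx, ENNReal.zero_rpow_of_pos (by positivity : (0:ℝ) < 1/(j:ℝ)), hj0]
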